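/- (Incompleteness of Lipton's rule.) Let Σ₀ = {a,b₁,b₂,c} ∪ {β} be distinct actions. Let G′ be the CFG with locations {p,q}, initial p, exit q, and edges (p,a,q), (p,β,q), (p,c,q); let G_β be the CFG with locations {u,s,v}, initial u, exit v, and edges (u,b₁,s), (s,b₂,v); let G be the CFG with locations {p,s,q}, initial p, exit q, and edges (p,a,q), (p,b₁,s), (s,b₂,q), (p,c,q); and let F = (G′,(β,G_β)) be the corresponding atomic fusion of G. Let I = {a,b₁,b₂,c}² ∖ {(a,b₂),(b₁,c)}. Then F is sound with respect to I, although b₁ is not a right-mover and b₂ is not a left-mover with respect to I. -/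

import Mathlib

/-!
Common definitions: control flow graphs, traces, interleavings of parameterized
programs, the covering preorder, Mazurkiewicz reductions, atomic fusions,
sync-point instrumentations, locks and general synchronization alphabets.
-/

/-- `PathRel E ℓ w ℓ'` : the word `w` labels a path from `ℓ` to `ℓ'` in the
labeled graph with edge relation `E`. -/
inductive PathRel {L α : Type} (E : L → α → L → Prop) : L → List α → L → Prop
  | nil (ℓ : L) : PathRel E ℓ [] ℓ
  | cons {ℓ ℓ' ℓ'' : L} {a : α} {w : List α} :
      E ℓ a ℓ' → PathRel E ℓ' w ℓ'' → PathRel E ℓ (a :: w) ℓ''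

/-- A control flow graph over the alphabet `α`. -/
structure CFG (α : Type) where
  Loc : Type
  loc_finite : Finite Loc
  Edge : Loc → α → Loc → Prop
  init : Loc
  exit : Loc
  init_ne_exit : init ≠ exit

namespace CFG

variable {α : Type}

/-- The set of words labeling paths from the initial to the exit location. -/
def traces (G : CFG α) : Set (List α) := { w | PathRel G.Edge G.init w G.exit }

/-- The set of actions occurring in `G`. -/
def alphabet (G : CFG α) : Set α := { a | ∃ ℓ ℓ', G.Edge ℓ a ℓ' }

/-- Action `a` labels at most one edge of `G`. -/
def UniqueAct (G : CFG α) (a : α) : Prop :=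
  ∀ ⦃ℓ₁ ℓ₁' ℓ₂ ℓ₂' : G.Loc⦄, G.Edge ℓ₁ a ℓ₁' → G.Edge ℓ₂ a ℓ₂' → ℓ₁ = ℓ₂ ∧ ℓ₁' = ℓ₂'

/-- The transition relation is finite. -/
def EdgeFinite (G : CFG α) : Prop :=
  { p : G.Loc × α × G.Loc | G.Edge p.1 p.2.1 p.2.2 }.Finite

/-- Every location is reachable from the initial location, and the exit
location is reachable from every location. -/
def Reachable (G : CFG α) : Prop :=
  ∀ ℓ : G.Loc, (∃ w, PathRel G.Edge G.init w ℓ) ∧ (∃ w, PathRel G.Edge ℓ w G.exit)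

/-- Well-formedness of a CFG over a plain alphabet (finitely many transitions,
reachability conditions, and every action labels at most one edge). -/
def WF (G : CFG α) : Prop := G.EdgeFinite ∧ G.Reachable ∧ ∀ a : α, G.UniqueAct a

end CFG

/-! ### Interleavings -/

/-- `τ↑i` : the projection of an interleaving to the actions of thread `i`. -/
def projThread {α : Type} (i : ℕ) (τ : List (α × ℕ)) : List α :=
  (τ.filter (fun x => x.2 == i)).map Prod.fst

/-- The interleavings of the parameterized program with thread template `G`
and no synchronization. -/
def progLang {α : Type} (G : CFG α) : Set (List (α × ℕ)) :=
  { τ | ∀ i : ℕ, projThread i τ ∈ G.traces ∨ projThread i τ = [] }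

/-- One swap of two adjacent commuting indexed actions of different threads. -/
def SwapStep {α : Type} (I : Set (α × α)) (τ τ' : List (α × ℕ)) : Prop :=
  ∃ (ρ σ : List (α × ℕ)) (a b : α) (i j : ℕ),
    (a, b) ∈ I ∧ i ≠ j ∧
      τ = ρ ++ (a, i) :: (b, j) :: σ ∧ τ' = ρ ++ (b, j) :: (a, i) :: σ

/-- The covering preorder `⊑_I`: the smallest reflexive-transitive relation
allowing swaps of adjacent `I`-commuting actions of different threads. -/
def CoveredBy {α : Type} (I : Set (α × α)) : List (α × ℕ) → List (α × ℕ) → Prop :=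
  Relation.ReflTransGen (SwapStep I)

/-- `L₁` is a Mazurkiewicz reduction (up to `I`) of `L₂`. -/
def MazReduction {α : Type} (I : Set (α × α)) (L₁ L₂ : Set (List (α × ℕ))) : Prop :=
  L₁ ⊆ L₂ ∧ ∀ τ ∈ L₂, ∃ τ' ∈ L₁, CoveredBy I τ τ'

/-! ### Morphisms -/

/-- Image of a word under a morphism `μ : α → 𝒫(β^*)`. -/
def morphWord {α β : Type} (μ : α → Set (List β)) : List α → Set (List β)
  | [] => {[]}
  | x :: w => { s | ∃ u ∈ μ x, ∃ v ∈ morphWord μ w, s = u ++ v }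

/-- Image of a language under a morphism. -/
def morphLang {α β : Type} (μ : α → Set (List β)) (L : Set (List α)) : Set (List β) :=
  ⋃ w ∈ L, morphWord μ w

/-! ### Atomic fusions -/

/-- Locations of the graph obtained from `G'` by substituting `Gβ k` for the
edge labeled `β k`: locations of `G'` together with the interior locations of
each `Gβ k`. -/
def fuseLoc {α : Type} (G' : CFG α) {n : ℕ} (Gβ : Fin n → CFG α) : Type :=
  G'.Loc ⊕ Σ k : Fin n, { ℓ : (Gβ k).Loc // ℓ ≠ (Gβ k).init ∧ ℓ ≠ (Gβ k).exit }

open Classical in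
/-- Embedding of the locations of `Gβ k` into the substituted graph, identifying
the initial and exit locations of `Gβ k` with the endpoints of the `β k` edge. -/
noncomputable def fuseEmb {α : Type} (G' : CFG α) {n : ℕ} (Gβ : Fin n → CFG α)
    (src tgt : Fin n → G'.Loc) (k : Fin n) (ℓ : (Gβ k).Loc) : fuseLoc G' Gβ :=
  if h1 : ℓ = (Gβ k).init then Sum.inl (src k)
  else if h2 : ℓ = (Gβ k).exit then Sum.inl (tgt k)
  else Sum.inr ⟨k, ℓ, h1, h2⟩

/-- Edges of the graph obtained from `G'` by substituting each `Gβ k` for the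
edge labeled `β k` (with endpoints `src k`, `tgt k`). -/
def fuseEdge {α : Type} (G' : CFG α) {n : ℕ} (β : Fin n → α) (Gβ : Fin n → CFG α)
    (src tgt : Fin n → G'.Loc) (x : fuseLoc G' Gβ) (a : α) (y : fuseLoc G' Gβ) : Prop :=
  (∃ ℓ ℓ', G'.Edge ℓ a ℓ' ∧ (∀ k, a ≠ β k) ∧ x = Sum.inl ℓ ∧ y = Sum.inl ℓ') ∨
  (∃ k ℓ ℓ', (Gβ k).Edge ℓ a ℓ' ∧
      x = fuseEmb G' Gβ src tgt k ℓ ∧ y = fuseEmb G' Gβ src tgt k ℓ')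

/-- An atomic fusion `F = (G', (β 0, Gβ 0), …, (β (n-1), Gβ (n-1)))` of the CFG `G`:
`G` is (up to isomorphism) obtained from `G'` by replacing, for each `k`, the unique
edge labeled `β k` by the graph `Gβ k`. -/
structure AtomicFusion {α : Type} (G : CFG α) (n : ℕ) where
  G' : CFG α
  β : Fin n → α
  Gβ : Fin n → CFG α
  β_inj : Function.Injective β
  src : Fin n → G'.Loc
  tgt : Fin n → G'.Loc
  β_edge : ∀ k, G'.Edge (src k) (β k) (tgt k)
  Gβ_alph : ∀ k a, a ∈ (Gβ k).alphabet → ∀ k', a ≠ β k'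
  Gβ_nonempty : ∀ k, ((Gβ k).traces).Nonempty
  iso : G.Loc ≃ fuseLoc G' Gβ
  iso_init : iso G.init = Sum.inl G'.init
  iso_exit : iso G.exit = Sum.inl G'.exit
  iso_edge : ∀ ℓ a ℓ', G.Edge ℓ a ℓ' ↔ fuseEdge G' β Gβ src tgt (iso ℓ) a (iso ℓ')

namespace AtomicFusion

variable {α : Type} {G : CFG α} {n : ℕ}

/-- The fusion morphism `μ_F`: maps each block symbol `β k` to `traces (Gβ k)`
and any other action `a` to `{[a]}`. -/
def morph (F : AtomicFusion G n) (a : α) : Set (List α) :=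
  { w | (∃ k, a = F.β k ∧ w ∈ (F.Gβ k).traces) ∨ ((∀ k, a ≠ F.β k) ∧ w = [a]) }

/-- The lift `μ̂_F` of the fusion morphism to indexed actions. -/
def morphIdx (F : AtomicFusion G n) (x : α × ℕ) : Set (List (α × ℕ)) :=
  { w | ∃ u ∈ F.morph x.1, w = u.map (fun a => (a, x.2)) }

/-- Soundness of an atomic fusion wrt. the commutativity relation `I`:
`μ̂_F(L(G'))` is a Mazurkiewicz reduction (up to `I`) of `L(G)`. -/
def Sound (F : AtomicFusion G n) (I : Set (α × α)) : Prop :=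
  MazReduction I (morphLang F.morphIdx (progLang F.G')) (progLang G)

end AtomicFusion

/-! ### Movers -/

/-- `a` is a left-mover if `(b, a) ∈ I` for all `b ∈ Σ(G)`. -/
def LeftMover {α : Type} (G : CFG α) (I : Set (α × α)) (a : α) : Prop :=
  ∀ b ∈ G.alphabet, (b, a) ∈ I

/-- `a` is a right-mover if `(a, b) ∈ I` for all `b ∈ Σ(G)`. -/
def RightMover {α : Type} (G : CFG α) (I : Set (α × α)) (a : α) : Prop :=
  ∀ b ∈ G.alphabet, (a, b) ∈ I

/-! ### Sync-points -/

/-- The word `⟨•:t₁⟩ … ⟨•:t_n⟩` where `T = {t₁ < … < t_n}`; the sync-point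
symbol `•` is represented by `none`. -/
def bulletWord {α : Type} (T : Finset ℕ) : List (Option α × ℕ) :=
  (T.sort (· ≤ ·)).map (fun t => ((none : Option α), t))

/-- A concatenation of words, each of which either consists of program actions
of threads in `T` only, or equals `⟨•:T⟩`. -/
inductive PhaseWord {α : Type} (T : Finset ℕ) : List (Option α × ℕ) → Prop
  | nil : PhaseWord T []
  | act {w τ : List (Option α × ℕ)} :
      (∀ x ∈ w, (∃ a : α, x.1 = some a) ∧ x.2 ∈ T) → PhaseWord T τ → PhaseWord T (w ++ τ)
  | bullet {τ : List (Option α × ℕ)} : PhaseWord T τ → PhaseWord T (bulletWord T ++ τ)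

/-- `sync_{•,T}`: while the threads in `T` are running they pass sync-points
together; at some point a subset `T' ⊊ T` of threads remains. -/
inductive SyncT {α : Type} : Finset ℕ → List (Option α × ℕ) → Prop
  | base : SyncT ∅ []
  | step {T T' : Finset ℕ} {τ₁ τ₂ : List (Option α × ℕ)} :
      T' ⊂ T → PhaseWord T τ₁ → SyncT T' τ₂ → SyncT T (τ₁ ++ τ₂)

/-- `sync_•(τ̂)` : there is a finite set `T ⊆ ℕ` with `sync_{•,T}(τ̂)`. -/
def SyncBullet {α : Type} (τ : List (Option α × ℕ)) : Prop := ∃ T : Finset ℕ, SyncT T τ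

/-- Restriction of an indexed word over `Σ ∪ {•}` to its `Σ`-indexed letters. -/
def restrictSigma {α : Type} (τ : List (Option α × ℕ)) : List (α × ℕ) :=
  τ.filterMap (fun x => x.1.map (fun a => (a, x.2)))

/-- `G'` is a sync-point instrumentation of `G`: erasing `•` from the traces of
`G'` yields exactly the traces of `G`, injectively. -/
structure SyncInstr {α : Type} (G : CFG α) (G' : CFG (Option α)) : Prop where
  proj_traces : G.traces = (fun τ => τ.filterMap id) '' G'.traces
  proj_inj : ∀ τ₁ ∈ G'.traces, ∀ τ₂ ∈ G'.traces, τ₁.filterMap id = τ₂.filterMap id → τ₁ = τ₂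

/-- Well-formedness of a CFG over `Σ ∪ {•}` (every action of `Σ` labels at most
one edge; `•` may label several edges). -/
def CFG.WFsync {α : Type} (G' : CFG (Option α)) : Prop :=
  G'.EdgeFinite ∧ G'.Reachable ∧ ∀ a : α, G'.UniqueAct (some a)

/-- The language `L(G, G')` of the sync-point instrumented program. -/
def instrLang {α : Type} (G' : CFG (Option α)) : Set (List (α × ℕ)) :=
  { τ | ∃ τ' : List (Option α × ℕ), τ = restrictSigma τ' ∧ SyncBullet τ' ∧
      ∀ i : ℕ, projThread i τ' ∈ G'.traces ∨ projThread i τ' = [] }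

/-- `|w|_•` : the number of occurrences of the sync-point symbol in `w`. -/
def bulletCount {α : Type} (w : List (Option α)) : ℕ := (w.filter (fun x => x.isNone)).length

/-- The phase order `⤳`: `a` can occur in a strictly later phase than `b` in
some execution of the instrumented program. -/
def PhaseOrder {α : Type} (G' : CFG (Option α)) (a b : α) : Prop :=
  ∃ τ' : List (Option α × ℕ), SyncBullet τ' ∧ restrictSigma τ' ∈ instrLang G' ∧
    ∃ i j : ℕ, i ≠ j ∧
      ∃ τ₁ σ₁, projThread i τ' = τ₁ ++ some a :: σ₁ ∧
      ∃ τ₂ σ₂, projThread j τ' = τ₂ ++ some b :: σ₂ ∧ bulletCount τ₁ < bulletCount τ₂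

/-! ### General synchronization alphabets -/

/-- A synchronization alphabet: a set `σs` of synchronization actions together
with a predicate `Φ` on indexed words over `Σ ∪ S`, preserved by all
permutations of thread indices. -/
structure SyncAlphabet (α σs : Type) where
  Φ : List ((α ⊕ σs) × ℕ) → Prop
  perm_inv : ∀ (π : Equiv.Perm ℕ) (τ : List ((α ⊕ σs) × ℕ)),
      Φ τ → Φ (τ.map (fun x => (x.1, π x.2)))

/-- Restriction of an indexed word over `Σ ∪ S` to its `Σ`-indexed letters. -/
def restrictActions {α σs : Type} (τ' : List ((α ⊕ σs) × ℕ)) : List (α × ℕ) :=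
  τ'.filterMap (fun x => (x.1.getLeft?).map (fun a => (a, x.2)))

/-- The language of the parameterized program `P = ((S, Φ), G)`. -/
def syncLang {α σs : Type} (SA : SyncAlphabet α σs) (G : CFG (α ⊕ σs)) :
    Set (List (α × ℕ)) :=
  { τ | ∃ τ', τ = restrictActions τ' ∧ SA.Φ τ' ∧
      ∀ i : ℕ, projThread i τ' ∈ G.traces ∨ projThread i τ' = [] }

/-- The configuration `C` is coverable in `P = ((S, Φ), G)`. -/
def Coverable {α σs : Type} (SA : SyncAlphabet α σs) (G : CFG (α ⊕ σs))
    {r : ℕ} (C : Fin r → G.Loc) : Prop :=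
  ∃ (τ' : List ((α ⊕ σs) × ℕ)) (t : Fin r → ℕ), SA.Φ τ' ∧ Function.Injective t ∧
    ∀ k, PathRel G.Edge G.init (projThread (t k) τ') (C k)

/-- Well-formedness of a CFG over `Σ ∪ S` (only actions of `Σ` are required to
label at most one edge). -/
def CFG.WFsum {α σs : Type} (G : CFG (α ⊕ σs)) : Prop :=
  G.EdgeFinite ∧ G.Reachable ∧ ∀ a : α, G.UniqueAct (Sum.inl a)

/-! ### Locks -/

/-- The valid projections of a lock-respecting execution to a single lock `m`:
a sequence of blocks `⟨acq(m) rel(m) : i⟩`, optionally followed by a single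
`⟨acq(m) : i⟩`.  `true` stands for `acq(m)`, `false` for `rel(m)`. -/
inductive LockSeq : List (Bool × ℕ) → Prop
  | nil : LockSeq []
  | final (i : ℕ) : LockSeq [(true, i)]
  | block (i : ℕ) {w : List (Bool × ℕ)} : LockSeq w → LockSeq ((true, i) :: (false, i) :: w)

/-- Projection of an indexed word over `Σ ∪ S_lk` to the indexed occurrences of
`acq(m)`/`rel(m)` for the lock `m`. -/
def lockProj {α M : Type} [DecidableEq M] (m : M) (τ' : List ((α ⊕ (M × Bool)) × ℕ)) :
    List (Bool × ℕ) :=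
  τ'.filterMap (fun x => match x.1 with
    | Sum.inl _ => none
    | Sum.inr p => if p.1 = m then some (p.2, x.2) else none)

/-- The lock synchronization predicate `sync_lk`. -/
def SyncLk {α M : Type} [DecidableEq M] (τ' : List ((α ⊕ (M × Bool)) × ℕ)) : Prop :=
  ∀ m : M, LockSeq (lockProj m τ')

/-- The language of a program `P = ((S_lk, sync_lk), G)` with locks. -/
def lockLang {α M : Type} [DecidableEq M] (G : CFG (α ⊕ (M × Bool))) :
    Set (List (α × ℕ)) :=
  { τ | ∃ τ', τ = restrictActions τ' ∧ SyncLk τ' ∧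
      ∀ i : ℕ, projThread i τ' ∈ G.traces ∨ projThread i τ' = [] }

/-- Coverability of a configuration in a program with locks. -/
def CoverableLk {α M : Type} [DecidableEq M] (G : CFG (α ⊕ (M × Bool)))
    {r : ℕ} (C : Fin r → G.Loc) : Prop :=
  ∃ (τ' : List ((α ⊕ (M × Bool)) × ℕ)) (t : Fin r → ℕ), SyncLk τ' ∧ Function.Injective t ∧
    ∀ k, PathRel G.Edge G.init (projThread (t k) τ') (C k)

/-! ### Locks and sync-points combined -/

/-- Restriction of an indexed word over `Σ ∪ S_lk ∪ {•}` to `(Σ ∪ S_lk)`-indexed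
letters. -/
def restrictSyncWord {α M : Type} (τ' : List (Option (α ⊕ (M × Bool)) × ℕ)) :
    List ((α ⊕ (M × Bool)) × ℕ) :=
  τ'.filterMap (fun x => x.1.map (fun e => (e, x.2)))

/-- Restriction of an indexed word over `Σ ∪ S_lk ∪ {•}` to `(Σ ∪ {•})`-indexed
letters. -/
def restrictBulletWord {α M : Type} (τ' : List (Option (α ⊕ (M × Bool)) × ℕ)) :
    List (Option α × ℕ) :=
  τ'.filterMap (fun x => match x.1 with
    | none => some ((none : Option α), x.2)
    | some (Sum.inl a) => some (some a, x.2)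
    | some (Sum.inr _) => none)

/-- Restriction of an indexed word over `Σ ∪ S_lk ∪ {•}` to `Σ`-indexed letters. -/
def restrictActionsO {α M : Type} (τ' : List (Option (α ⊕ (M × Bool)) × ℕ)) :
    List (α × ℕ) :=
  τ'.filterMap (fun x => match x.1 with
    | some (Sum.inl a) => some (a, x.2)
    | _ => none)

/-- The language `L(P̂, G')` of a lock program instrumented with sync-points. -/
def instrLockLang {α M : Type} [DecidableEq M] (G' : CFG (Option (α ⊕ (M × Bool)))) :
    Set (List (α × ℕ)) :=
  { τ | ∃ τ', τ = restrictActionsO τ' ∧ SyncLk (restrictSyncWord τ') ∧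
      SyncBullet (restrictBulletWord τ') ∧
      ∀ i : ℕ, projThread i τ' ∈ G'.traces ∨ projThread i τ' = [] }

/-- The thread template `G` with locations `p = 0`, `s = 1`, `q = 2` (initial `p`,
exit `q`) and edges `(p,a,q)`, `(p,b₁,s)`, `(s,b₂,q)`, `(p,c,q)`. -/
def exG {α : Type} (a b₁ b₂ c : α) : CFG α where
  Loc := Fin 3
  loc_finite := inferInstance
  Edge := fun ℓ x ℓ' =>
    (ℓ = 0 ∧ x = a ∧ ℓ' = 2) ∨ (ℓ = 0 ∧ x = b₁ ∧ ℓ' = 1) ∨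
    (ℓ = 1 ∧ x = b₂ ∧ ℓ' = 2) ∨ (ℓ = 0 ∧ x = c ∧ ℓ' = 2)
  init := 0
  exit := 2
  init_ne_exit := by decide

/-- The fused thread template `G'` with locations `p = 0`, `q = 1` (initial `p`, exit `q`)
and edges `(p,a,q)`, `(p,β,q)`, `(p,c,q)`. -/
def exG' {α : Type} (a c β : α) : CFG α where
  Loc := Fin 2
  loc_finite := inferInstance
  Edge := fun ℓ x ℓ' =>
    (ℓ = 0 ∧ x = a ∧ ℓ' = 1) ∨ (ℓ = 0 ∧ x = β ∧ ℓ' = 1) ∨ (ℓ = 0 ∧ x = c ∧ ℓ' = 1)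
  init := 0
  exit := 1
  init_ne_exit := by decide

/-- The atomic block body `G_β` with locations `u = 0`, `s = 1`, `v = 2` (initial `u`,
exit `v`) and edges `(u,b₁,s)`, `(s,b₂,v)`. -/
def exGβ {α : Type} (b₁ b₂ : α) : CFG α where
  Loc := Fin 3
  loc_finite := inferInstance
  Edge := fun ℓ x ℓ' => (ℓ = 0 ∧ x = b₁ ∧ ℓ' = 1) ∨ (ℓ = 1 ∧ x = b₂ ∧ ℓ' = 2)
  init := 0
  exit := 2
  init_ne_exit := by decide

/-- The fusion morphism `μ_F` of the atomic fusion `F = (G', (β, G_β))`: it maps `β` to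
`traces(G_β)` and every other action `x` to `{[x]}`. -/
def exMorph {α : Type} (β b₁ b₂ : α) (x : α) : Set (List α) :=
  { w | (x = β ∧ w ∈ (exGβ b₁ b₂).traces) ∨ (x ≠ β ∧ w = [x]) }

/-- The lift `μ̂_F` of the fusion morphism to indexed actions. -/
def exMorphIdx {α : Type} (β b₁ b₂ : α) (x : α × ℕ) : Set (List (α × ℕ)) :=
  { w | ∃ u ∈ exMorph β b₁ b₂ x.1, w = u.map (fun y => (y, x.2)) }

/-! ### Auxiliary lemmas for Statement 12 -/

section Stmt12Aux

variable {α : Type}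

lemma projThread_append (i : ℕ) (l₁ l₂ : List (α × ℕ)) :
    projThread i (l₁ ++ l₂) = projThread i l₁ ++ projThread i l₂ := by
  simp [projThread]

lemma projThread_cons (i : ℕ) (x : α × ℕ) (l : List (α × ℕ)) :
    projThread i (x :: l) = if x.2 = i then x.1 :: projThread i l else projThread i l := by
  by_cases h : x.2 = i <;> simp [projThread, List.filter_cons, h]

lemma mem_projThread {τ : List (α × ℕ)} {x : α × ℕ} (hx : x ∈ τ) :
    x.1 ∈ projThread x.2 τ :=
  List.mem_map.mpr ⟨x, List.mem_filter.mpr ⟨hx, by simp⟩, rfl⟩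

lemma projThread_eq_nil {τ : List (α × ℕ)} {i : ℕ} (h : ∀ x ∈ τ, x.2 ≠ i) :
    projThread i τ = [] := by
  induction τ with
  | nil => rfl
  | cons x l ih =>
    rw [projThread_cons, if_neg (h x (List.mem_cons_self : x ∈ x :: l))]
    exact ih fun y hy => h y (List.mem_cons_of_mem _ hy)

lemma ne_of_projThread_eq_nil {τ : List (α × ℕ)} {i : ℕ} (h : projThread i τ = []) :
    ∀ x ∈ τ, x.2 ≠ i := by
  intro x hx hxi
  have hm := mem_projThread hx
  rw [hxi, h] at hm
  exact absurd hm List.not_mem_nil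

lemma projThread_filter_fst (P : α → Bool) (i : ℕ) (τ : List (α × ℕ)) :
    projThread i (τ.filter (fun x => P x.1)) = (projThread i τ).filter P := by
  induction τ with
  | nil => rfl
  | cons x l ih =>
    rw [List.filter_cons, projThread_cons]
    by_cases hi : x.2 = i <;> by_cases hp : P x.1 <;>
      simp [hi, hp, projThread_cons, List.filter_cons, ih]

lemma projThread_map_self (i : ℕ) (w : List α) :
    projThread i (w.map fun y => (y, i)) = w := by
  induction w with
  | nil => rfl
  | cons x w ih => simp [projThread_cons, ih]

lemma projThread_map_other {i j : ℕ} (h : j ≠ i) (w : List α) :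
    projThread i (w.map fun y => (y, j)) = [] := by
  refine projThread_eq_nil ?_
  intro x hx
  obtain ⟨y, _, rfl⟩ := List.mem_map.mp hx
  exact h

lemma projThread_map_idx (x : α) :
    ∀ (l : List ℕ), l.Nodup → ∀ i,
      projThread i (l.map fun j => (x, j)) = if i ∈ l then [x] else [] := by
  intro l
  induction l with
  | nil => intro _ i; simp [projThread]
  | cons j l ih =>
    intro hnd i
    obtain ⟨hj, hnd'⟩ := List.nodup_cons.mp hnd
    rw [List.map_cons, projThread_cons]
    by_cases hij : j = i
    · subst hij
      rw [if_pos rfl, ih hnd' j, if_neg hj, if_pos (List.mem_cons_self : j ∈ j :: l)]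
    · rw [if_neg hij, ih hnd' i]
      by_cases hil : i ∈ l
      · rw [if_pos hil, if_pos (List.mem_cons_of_mem _ hil)]
      · rw [if_neg hil]
        rw [if_neg (by
          intro hmem
          rcases List.mem_cons.mp hmem with rfl | hmem'
          · exact hij rfl
          · exact hil hmem')]

lemma swapStep_head {I : Set (α × α)} {x y : α × ℕ} (σ : List (α × ℕ))
    (hxy : (x.1, y.1) ∈ I) (hij : x.2 ≠ y.2) :
    SwapStep I (x :: y :: σ) (y :: x :: σ) :=
  ⟨[], σ, x.1, y.1, x.2, y.2, hxy, hij, by simp, by simp⟩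

lemma swapStep_context {I : Set (α × α)} {u v : List (α × ℕ)} (ρ σ : List (α × ℕ))
    (h : SwapStep I u v) : SwapStep I (ρ ++ u ++ σ) (ρ ++ v ++ σ) := by
  obtain ⟨ρ', σ', x, y, i, j, hIxy, hij, hu, hv⟩ := h
  exact ⟨ρ ++ ρ', σ' ++ σ, x, y, i, j, hIxy, hij, by simp [hu], by simp [hv]⟩

lemma coveredBy_context {I : Set (α × α)} {u v : List (α × ℕ)} (ρ σ : List (α × ℕ))
    (h : CoveredBy I u v) : CoveredBy I (ρ ++ u ++ σ) (ρ ++ v ++ σ) :=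
  Relation.ReflTransGen.lift (fun l => ρ ++ l ++ σ)
    (fun _ _ hs => swapStep_context ρ σ hs) _ _ h

lemma projThread_swapStep {I : Set (α × α)} {τ τ' : List (α × ℕ)}
    (h : SwapStep I τ τ') (i : ℕ) : projThread i τ = projThread i τ' := by
  obtain ⟨ρ, σ, x, y, j, k, _, hjk, hτ, hτ'⟩ := h
  subst hτ hτ'
  by_cases hj : j = i <;> by_cases hk : k = i <;>
    simp_all [projThread_append, projThread_cons]

lemma projThread_coveredBy {I : Set (α × α)} {τ τ' : List (α × ℕ)}
    (h : CoveredBy I τ τ') (i : ℕ) : projThread i τ = projThread i τ' := by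
  induction h with
  | refl => rfl
  | tail _ hs ih => exact ih.trans (projThread_swapStep hs i)

lemma coveredBy_moveRight {I : Set (α × α)} {x : α × ℕ} {σ : List (α × ℕ)} :
    ∀ {ρ : List (α × ℕ)}, (∀ y ∈ ρ, (x.1, y.1) ∈ I ∧ x.2 ≠ y.2) →
      CoveredBy I (x :: (ρ ++ σ)) (ρ ++ x :: σ)
  | [], _ => Relation.ReflTransGen.refl
  | y :: ρ', h => by
    have h1 : SwapStep I (x :: y :: (ρ' ++ σ)) (y :: x :: (ρ' ++ σ)) :=
      swapStep_head _ (h y (List.mem_cons_self : y ∈ y :: ρ')).1 (h y (List.mem_cons_self : y ∈ y :: ρ')).2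
    have h2 : CoveredBy I (x :: (ρ' ++ σ)) (ρ' ++ x :: σ) :=
      coveredBy_moveRight (fun z hz => h z (List.mem_cons_of_mem _ hz))
    have h2' : CoveredBy I (y :: x :: (ρ' ++ σ)) (y :: (ρ' ++ x :: σ)) := by
      simpa using coveredBy_context [y] [] h2
    exact Relation.ReflTransGen.head h1 h2'

lemma coveredBy_moveLeft {I : Set (α × α)} {x : α × ℕ} {σ : List (α × ℕ)} :
    ∀ {ρ : List (α × ℕ)}, (∀ y ∈ ρ, (y.1, x.1) ∈ I ∧ y.2 ≠ x.2) →
      CoveredBy I (ρ ++ x :: σ) (x :: (ρ ++ σ))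
  | [], _ => Relation.ReflTransGen.refl
  | y :: ρ', h => by
    have h2 : CoveredBy I (ρ' ++ x :: σ) (x :: (ρ' ++ σ)) :=
      coveredBy_moveLeft (fun z hz => h z (List.mem_cons_of_mem _ hz))
    have h2' : CoveredBy I (y :: (ρ' ++ x :: σ)) (y :: x :: (ρ' ++ σ)) := by
      simpa using coveredBy_context [y] [] h2
    have h1 : SwapStep I (y :: x :: (ρ' ++ σ)) (x :: y :: (ρ' ++ σ)) :=
      swapStep_head _ (h y (List.mem_cons_self : y ∈ y :: ρ')).1 (h y (List.mem_cons_self : y ∈ y :: ρ')).2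
    exact h2'.trans (Relation.ReflTransGen.single h1)

lemma coveredBy_pullFront {I : Set (α × α)} (p : α × ℕ → Bool) :
    ∀ (τ : List (α × ℕ)),
      (∀ x ∈ τ, ∀ y ∈ τ, p x = false → p y = true → (x.1, y.1) ∈ I ∧ x.2 ≠ y.2) →
      CoveredBy I τ (τ.filter p ++ τ.filter (fun x => !p x))
  | [], _ => Relation.ReflTransGen.refl
  | x :: τ, h => by
    have hrest := coveredBy_pullFront p τ
      (fun u hu y hy => h u (List.mem_cons_of_mem _ hu) y (List.mem_cons_of_mem _ hy))
    have step1 : CoveredBy I (x :: τ)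
        (x :: (τ.filter p ++ τ.filter (fun y => !p y))) := by
      simpa using coveredBy_context [x] [] hrest
    by_cases hp : p x
    · have heq : (x :: τ).filter p ++ (x :: τ).filter (fun y => !p y)
          = x :: (τ.filter p ++ τ.filter (fun y => !p y)) := by
        simp [List.filter_cons, hp]
      rw [heq]; exact step1
    · have heq : (x :: τ).filter p ++ (x :: τ).filter (fun y => !p y)
          = τ.filter p ++ x :: τ.filter (fun y => !p y) := by
        simp [List.filter_cons, hp]
      rw [heq]
      refine step1.trans (coveredBy_moveRight ?_)
      intro y hy
      exact h x (List.mem_cons_self : x ∈ x :: τ) y (List.mem_cons_of_mem _ (List.mem_of_mem_filter hy))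
        (Bool.eq_false_iff.mpr hp) ((List.mem_filter.mp hy).2)

lemma projThread_single_split {i : ℕ} {y : α} :
    ∀ {τ : List (α × ℕ)}, projThread i τ = [y] →
      ∃ ρ σ, τ = ρ ++ (y, i) :: σ ∧ (∀ x ∈ ρ, x.2 ≠ i) ∧ (∀ x ∈ σ, x.2 ≠ i)
  | [], h => by simp [projThread] at h
  | x :: τ, h => by
    rw [projThread_cons] at h
    by_cases hx : x.2 = i
    · rw [if_pos hx] at h
      obtain ⟨h1, h2⟩ := List.cons_eq_cons.mp h
      refine ⟨[], τ, ?_, by simp, ne_of_projThread_eq_nil h2⟩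
      obtain ⟨x1, x2⟩ := x
      simp only [List.nil_append]
      congr 1
      exact Prod.ext h1.symm hx.symm |>.symm
    · rw [if_neg hx] at h
      obtain ⟨ρ, σ, rfl, hρ, hσ⟩ := projThread_single_split h
      exact ⟨x :: ρ, σ, rfl, by
        intro z hz
        rcases List.mem_cons.mp hz with rfl | hz'
        · exact hx
        · exact hρ z hz', hσ⟩

def blocksOf (b₁ b₂ : α) : List ℕ → List (α × ℕ)
  | [] => []
  | i :: l => (b₁, i) :: (b₂, i) :: blocksOf b₁ b₂ l

lemma blockify {I : Set (α × α)} {b₁ b₂ : α}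
    (hI₁ : (b₁, b₂) ∈ I) (hI₂ : (b₂, b₂) ∈ I) :
    ∀ (n : ℕ) (w : List (α × ℕ)), w.length ≤ n →
      (∀ i, projThread i w = [b₁, b₂] ∨ projThread i w = []) →
      ∃ l : List ℕ, CoveredBy I w (blocksOf b₁ b₂ l) ∧ l.Nodup ∧
        ∀ j, (j ∈ l ↔ projThread j w ≠ []) := by
  intro n
  induction n with
  | zero =>
    intro w hlen _
    have hw : w = [] := List.length_eq_zero_iff.mp (Nat.le_zero.mp hlen)
    subst hw
    exact ⟨[], Relation.ReflTransGen.refl, List.nodup_nil, by simp [projThread]⟩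
  | succ n ih =>
    intro w hlen hw
    match w, hlen, hw with
    | [], _, _ => exact ⟨[], Relation.ReflTransGen.refl, List.nodup_nil, by simp [projThread]⟩
    | (x0, i) :: rest, hlen, hw =>
      have hpi := hw i
      rw [projThread_cons, if_pos rfl] at hpi
      rcases hpi with hpi | hpi
      swap
      · exact absurd hpi (by simp)
      have hx0 : x0 = b₁ := (List.cons_eq_cons.mp hpi).1
      have hrest : projThread i rest = [b₂] := (List.cons_eq_cons.mp hpi).2
      rw [hx0] at hw ⊢
      clear hpi
      obtain ⟨ρ, σ, rfl, hρ, hσ⟩ := projThread_single_split hrest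
      have hmv : CoveredBy I (ρ ++ (b₂, i) :: σ) ((b₂, i) :: (ρ ++ σ)) := by
        refine coveredBy_moveLeft fun z hz => ⟨?_, hρ z hz⟩
        have hzin : z ∈ (b₁, i) :: (ρ ++ (b₂, i) :: σ) :=
          List.mem_cons_of_mem _ (List.mem_append_left _ hz)
        have hzm := mem_projThread hzin
        rcases hw z.2 with hcase | hcase <;> rw [hcase] at hzm
        · rcases (by simpa using hzm : z.1 = b₁ ∨ z.1 = b₂) with h | h <;> rw [h]
          · exact hI₁
          · exact hI₂
        · exact absurd hzm List.not_mem_nil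
      have hcov1 : CoveredBy I ((b₁, i) :: (ρ ++ (b₂, i) :: σ))
          ((b₁, i) :: (b₂, i) :: (ρ ++ σ)) := by
        simpa using coveredBy_context [(b₁, i)] [] hmv
      have heqj : ∀ j, j ≠ i →
          projThread j ((b₁, i) :: (ρ ++ (b₂, i) :: σ)) = projThread j (ρ ++ σ) := by
        intro j hj
        rw [projThread_cons, if_neg (fun h => hj h.symm), projThread_append,
          projThread_cons, if_neg (fun h => hj h.symm), projThread_append]
      have hproj' : ∀ j, projThread j (ρ ++ σ) = [b₁, b₂] ∨ projThread j (ρ ++ σ) = [] := by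
        intro j
        by_cases hj : j = i
        · subst hj
          right
          rw [projThread_append, projThread_eq_nil hρ, projThread_eq_nil hσ]
          rfl
        · rw [← heqj j hj]; exact hw j
      have hlen' : (ρ ++ σ).length ≤ n := by
        simp only [List.length_cons, List.length_append] at hlen ⊢
        omega
      obtain ⟨l, hcovl, hnd, hmem⟩ := ih (ρ ++ σ) hlen' hproj'
      refine ⟨i :: l, ?_, ?_, ?_⟩
      · refine hcov1.trans ?_
        exact (show CoveredBy I _ _ by simpa [blocksOf] using coveredBy_context [(b₁, i), (b₂, i)] [] hcovl)
      · refine List.nodup_cons.mpr ⟨?_, hnd⟩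
        rw [hmem i]
        exact fun hne => hne (by
          rw [projThread_append, projThread_eq_nil hρ, projThread_eq_nil hσ]
          rfl)
      · intro j
        by_cases hj : j = i
        · subst hj
          simp [projThread_cons]
        · rw [List.mem_cons, heqj j hj, ← hmem j]
          simp [hj]

lemma morphWord_append {β' : Type} {μ : α → Set (List β')} :
    ∀ {u v : List α} {s t : List β'}, s ∈ morphWord μ u → t ∈ morphWord μ v →
      s ++ t ∈ morphWord μ (u ++ v)
  | [], v, s, t, hs, ht => by
    have : s = [] := hs
    subst this
    simpa using ht
  | x :: u, v, s, t, hs, ht => by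
    obtain ⟨p, hp, q, hq, rfl⟩ := hs
    exact ⟨p, hp, q ++ t, morphWord_append hq ht, by simp⟩

end Stmt12Aux

section Stmt12Main

variable {α : Type}

lemma morphWord_id (β' b₁' b₂' : α) :
    ∀ (u : List (α × ℕ)), (∀ x ∈ u, x.1 ≠ β') →
      u ∈ morphWord (exMorphIdx β' b₁' b₂') u
  | [], _ => rfl
  | x :: u, h => by
    refine ⟨[x], ⟨[x.1], Or.inr ⟨h x (List.mem_cons_self : x ∈ x :: u), rfl⟩, by simp⟩,
      u, morphWord_id β' b₁' b₂' u (fun y hy => h y (List.mem_cons_of_mem _ hy)), by simp⟩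

lemma mem_traces_exGβ (b₁ b₂ : α) : [b₁, b₂] ∈ (exGβ b₁ b₂).traces :=
  PathRel.cons (Or.inl ⟨rfl, rfl, rfl⟩)
    (PathRel.cons (Or.inr ⟨rfl, rfl, rfl⟩) (PathRel.nil _))

lemma blocksOf_mem_morphWord (β' b₁' b₂' : α) :
    ∀ (l : List ℕ), blocksOf b₁' b₂' l ∈
      morphWord (exMorphIdx β' b₁' b₂') (l.map (fun i => (β', i)))
  | [] => rfl
  | i :: l =>
    ⟨[(b₁', i), (b₂', i)],
      ⟨[b₁', b₂'], Or.inl ⟨rfl, mem_traces_exGβ b₁' b₂'⟩, by simp⟩,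
      blocksOf b₁' b₂' l, blocksOf_mem_morphWord β' b₁' b₂' l, rfl⟩

lemma projThread_morphWord (β' b₁' b₂' : α) :
    ∀ (σ : List (α × ℕ)) (τ : List (α × ℕ)),
      τ ∈ morphWord (exMorphIdx β' b₁' b₂') σ → ∀ i,
      projThread i τ ∈ morphWord (exMorph β' b₁' b₂') (projThread i σ)
  | [], τ, h, i => by
    have : τ = [] := h
    subst this
    rfl
  | x :: σ', τ, h, i => by
    obtain ⟨u, hu, v, hv, rfl⟩ := h
    obtain ⟨w, hw, rfl⟩ := hu
    rw [projThread_append, projThread_cons]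
    by_cases hx : x.2 = i
    · rw [if_pos hx]
      rw [← hx, projThread_map_self]
      exact ⟨w, hw, _, projThread_morphWord β' b₁' b₂' σ' v hv x.2, rfl⟩
    · rw [if_neg hx, projThread_map_other hx, List.nil_append]
      exact projThread_morphWord β' b₁' b₂' σ' v hv i

lemma exG'_path {a c β : α} {ℓ ℓ' : Fin 2} {w : List α}
    (h : PathRel (exG' a c β).Edge ℓ w ℓ') :
    (ℓ = ℓ' ∧ w = []) ∨ (ℓ = 0 ∧ ℓ' = 1 ∧ (w = [a] ∨ w = [β] ∨ w = [c])) := by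
  induction h with
  | nil ℓ => exact Or.inl ⟨rfl, rfl⟩
  | cons he _ ih =>
    simp only [exG'] at he
    rcases ih with ⟨rfl, rfl⟩ | ⟨h0, _, _⟩
    · rcases he with ⟨rfl, rfl, rfl⟩ | ⟨rfl, rfl, rfl⟩ | ⟨rfl, rfl, rfl⟩ <;> simp
    · rcases he with ⟨_, _, h1⟩ | ⟨_, _, h1⟩ | ⟨_, _, h1⟩ <;>
        exact absurd (h1 ▸ h0) (by decide)

lemma exGβ_path {b₁ b₂ : α} {ℓ ℓ' : Fin 3} {w : List α}
    (h : PathRel (exGβ b₁ b₂).Edge ℓ w ℓ') :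
    (ℓ = ℓ' ∧ w = []) ∨ (ℓ = 0 ∧ ℓ' = 1 ∧ w = [b₁]) ∨
      (ℓ = 1 ∧ ℓ' = 2 ∧ w = [b₂]) ∨ (ℓ = 0 ∧ ℓ' = 2 ∧ w = [b₁, b₂]) := by
  induction h with
  | nil ℓ => exact Or.inl ⟨rfl, rfl⟩
  | cons he _ ih =>
    simp only [exGβ] at he
    rcases he with ⟨rfl, rfl, rfl⟩ | ⟨rfl, rfl, rfl⟩
    · rcases ih with ⟨rfl, rfl⟩ | ⟨h0, _, _⟩ | ⟨_, rfl, rfl⟩ | ⟨h0, _, _⟩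
      · simp
      · exact absurd h0 (by decide)
      · simp
      · exact absurd h0 (by decide)
    · rcases ih with ⟨rfl, rfl⟩ | ⟨h0, _, _⟩ | ⟨h0, _, _⟩ | ⟨h0, _, _⟩
      · simp
      · exact absurd h0 (by decide)
      · exact absurd h0 (by decide)
      · exact absurd h0 (by decide)

lemma exG_path {a b₁ b₂ c : α} {ℓ ℓ' : Fin 3} {w : List α}
    (h : PathRel (exG a b₁ b₂ c).Edge ℓ w ℓ') :
    (ℓ = ℓ' ∧ w = []) ∨ (ℓ = 0 ∧ ℓ' = 2 ∧ (w = [a] ∨ w = [c] ∨ w = [b₁, b₂])) ∨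
      (ℓ = 0 ∧ ℓ' = 1 ∧ w = [b₁]) ∨ (ℓ = 1 ∧ ℓ' = 2 ∧ w = [b₂]) := by
  induction h with
  | nil ℓ => exact Or.inl ⟨rfl, rfl⟩
  | cons he _ ih =>
    simp only [exG] at he
    rcases he with ⟨rfl, rfl, rfl⟩ | ⟨rfl, rfl, rfl⟩ | ⟨rfl, rfl, rfl⟩ | ⟨rfl, rfl, rfl⟩
    · rcases ih with ⟨rfl, rfl⟩ | ⟨h0, _, _⟩ | ⟨h0, _, _⟩ | ⟨h0, _, _⟩
      · simp
      · exact absurd h0 (by decide)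
      · exact absurd h0 (by decide)
      · exact absurd h0 (by decide)
    · rcases ih with ⟨rfl, rfl⟩ | ⟨h0, _, _⟩ | ⟨h0, _, _⟩ | ⟨_, rfl, rfl⟩
      · simp
      · exact absurd h0 (by decide)
      · exact absurd h0 (by decide)
      · simp
    · rcases ih with ⟨rfl, rfl⟩ | ⟨h0, _, _⟩ | ⟨h0, _, _⟩ | ⟨h0, _, _⟩
      · simp
      · exact absurd h0 (by decide)
      · exact absurd h0 (by decide)
      · exact absurd h0 (by decide)
    · rcases ih with ⟨rfl, rfl⟩ | ⟨h0, _, _⟩ | ⟨h0, _, _⟩ | ⟨h0, _, _⟩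
      · simp
      · exact absurd h0 (by decide)
      · exact absurd h0 (by decide)
      · exact absurd h0 (by decide)

lemma mem_traces_exG_a (a b₁ b₂ c : α) : [a] ∈ (exG a b₁ b₂ c).traces :=
  PathRel.cons (Or.inl ⟨rfl, rfl, rfl⟩) (PathRel.nil _)

lemma mem_traces_exG_c (a b₁ b₂ c : α) : [c] ∈ (exG a b₁ b₂ c).traces :=
  PathRel.cons (Or.inr (Or.inr (Or.inr ⟨rfl, rfl, rfl⟩))) (PathRel.nil _)

lemma mem_traces_exG_b (a b₁ b₂ c : α) : [b₁, b₂] ∈ (exG a b₁ b₂ c).traces :=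
  PathRel.cons (Or.inr (Or.inl ⟨rfl, rfl, rfl⟩))
    (PathRel.cons (Or.inr (Or.inr (Or.inl ⟨rfl, rfl, rfl⟩))) (PathRel.nil _))

lemma mem_traces_exG'_a (a c β : α) : [a] ∈ (exG' a c β).traces :=
  PathRel.cons (Or.inl ⟨rfl, rfl, rfl⟩) (PathRel.nil _)

lemma mem_traces_exG'_β (a c β : α) : [β] ∈ (exG' a c β).traces :=
  PathRel.cons (Or.inr (Or.inl ⟨rfl, rfl, rfl⟩)) (PathRel.nil _)

lemma mem_traces_exG'_c (a c β : α) : [c] ∈ (exG' a c β).traces :=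
  PathRel.cons (Or.inr (Or.inr ⟨rfl, rfl, rfl⟩)) (PathRel.nil _)

end Stmt12Main

/-- Incompleteness of Lipton's rule. For the atomic fusion
`F = (G', (β, G_β))` of `G` and `I = {a,b₁,b₂,c}² ∖ {(a,b₂),(b₁,c)}`:
`F` is sound wrt. `I` (i.e. `μ̂_F(L(G'))` is a Mazurkiewicz reduction up to `I` of `L(G)`),
although `b₁` is not a right-mover and `b₂` is not a left-mover wrt. `I`. -/
theorem stmt_12 {α : Type} (a b₁ b₂ c β : α)
    (h1 : a ≠ b₁) (h2 : a ≠ b₂) (h3 : a ≠ c) (h4 : a ≠ β) (h5 : b₁ ≠ b₂)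
    (h6 : b₁ ≠ c) (h7 : b₁ ≠ β) (h8 : b₂ ≠ c) (h9 : b₂ ≠ β) (h10 : c ≠ β)
    (I : Set (α × α))
    (hI : I = (({a, b₁, b₂, c} : Set α) ×ˢ ({a, b₁, b₂, c} : Set α)) \ {(a, b₂), (b₁, c)}) :
    MazReduction I (morphLang (exMorphIdx β b₁ b₂) (progLang (exG' a c β)))
        (progLang (exG a b₁ b₂ c)) ∧
      ¬ RightMover (exG a b₁ b₂ c) I b₁ ∧
      ¬ LeftMover (exG a b₁ b₂ c) I b₂ := by
  classical
  have hIset : ∀ x y : α, (x = a ∨ x = b₁ ∨ x = b₂ ∨ x = c) →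
      (y = a ∨ y = b₁ ∨ y = b₂ ∨ y = c) →
      ¬(x = a ∧ y = b₂) → ¬(x = b₁ ∧ y = c) → (x, y) ∈ I := by
    intro x y hx hy hn1 hn2
    subst hI
    refine ⟨⟨by simpa using hx, by simpa using hy⟩, ?_⟩
    intro hmem
    simp only [Set.mem_insert_iff, Set.mem_singleton_iff, Prod.mk.injEq] at hmem
    tauto
  have Ib1a : (b₁, a) ∈ I := hIset _ _ (Or.inr (Or.inl rfl)) (Or.inl rfl)
    (by rintro ⟨h, -⟩; exact h1 h.symm) (by rintro ⟨-, h⟩; exact h3 h)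
  have Ib2a : (b₂, a) ∈ I := hIset _ _ (Or.inr (Or.inr (Or.inl rfl))) (Or.inl rfl)
    (by rintro ⟨h, -⟩; exact h2 h.symm) (by rintro ⟨h, -⟩; exact h5 h.symm)
  have Ica : (c, a) ∈ I := hIset _ _ (Or.inr (Or.inr (Or.inr rfl))) (Or.inl rfl)
    (by rintro ⟨h, -⟩; exact h3 h.symm) (by rintro ⟨h, -⟩; exact h6 h.symm)
  have Icb1 : (c, b₁) ∈ I := hIset _ _ (Or.inr (Or.inr (Or.inr rfl)))
    (Or.inr (Or.inl rfl))
    (by rintro ⟨h, -⟩; exact h3 h.symm) (by rintro ⟨h, -⟩; exact h6 h.symm)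
  have Icb2 : (c, b₂) ∈ I := hIset _ _ (Or.inr (Or.inr (Or.inr rfl)))
    (Or.inr (Or.inr (Or.inl rfl)))
    (by rintro ⟨h, -⟩; exact h3 h.symm) (by rintro ⟨h, -⟩; exact h6 h.symm)
  have Ib1b2 : (b₁, b₂) ∈ I := hIset _ _ (Or.inr (Or.inl rfl))
    (Or.inr (Or.inr (Or.inl rfl)))
    (by rintro ⟨h, -⟩; exact h1 h.symm) (by rintro ⟨-, h⟩; exact h8 h)
  have Ib2b2 : (b₂, b₂) ∈ I := hIset _ _ (Or.inr (Or.inr (Or.inl rfl)))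
    (Or.inr (Or.inr (Or.inl rfl)))
    (by rintro ⟨h, -⟩; exact h2 h.symm) (by rintro ⟨h, -⟩; exact h5 h.symm)
  refine ⟨⟨?_, ?_⟩, ?_, ?_⟩
  · -- μ̂_F(L(G')) ⊆ L(G)
    intro τ hτ
    simp only [morphLang, Set.mem_iUnion, exists_prop] at hτ
    obtain ⟨σ, hσL, hτσ⟩ := hτ
    simp only [progLang, Set.mem_setOf_eq]
    intro i
    have hproj := projThread_morphWord β b₁ b₂ σ τ hτσ i
    rcases hσL i with hσi | hσi
    · rcases exG'_path hσi with ⟨hbad, -⟩ | ⟨-, -, hcase | hcase | hcase⟩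
      · exact absurd hbad (by simp only [exG']; decide)
      · rw [hcase] at hproj
        obtain ⟨u, hu, v, hv, hcat⟩ := hproj
        have hv' : v = [] := hv
        rcases hu with ⟨hβ, -⟩ | ⟨-, rfl⟩
        · exact absurd hβ h4
        subst hv'
        rw [hcat, List.append_nil]
        exact Or.inl (mem_traces_exG_a a b₁ b₂ c)
      · rw [hcase] at hproj
        obtain ⟨u, hu, v, hv, hcat⟩ := hproj
        have hv' : v = [] := hv
        rcases hu with ⟨-, htr⟩ | ⟨hne, -⟩
        swap
        · exact absurd rfl hne
        have hu' : u = [b₁, b₂] := by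
          rcases exGβ_path htr with ⟨hbad, -⟩ | ⟨-, hbad, -⟩ | ⟨hbad, -, -⟩ | ⟨-, -, hgood⟩
          · exact absurd hbad (by simp only [exGβ]; decide)
          · exact absurd hbad (by simp only [exGβ]; decide)
          · exact absurd hbad (by simp only [exGβ]; decide)
          · exact hgood
        subst hv'
        rw [hcat, hu', List.append_nil]
        exact Or.inl (mem_traces_exG_b a b₁ b₂ c)
      · rw [hcase] at hproj
        obtain ⟨u, hu, v, hv, hcat⟩ := hproj
        have hv' : v = [] := hv
        rcases hu with ⟨hβ, -⟩ | ⟨-, rfl⟩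
        · exact absurd hβ h10
        subst hv'
        rw [hcat, List.append_nil]
        exact Or.inl (mem_traces_exG_c a b₁ b₂ c)
    · rw [hσi] at hproj
      exact Or.inr hproj
  · -- the covering property
    intro τ hτ
    simp only [progLang, Set.mem_setOf_eq] at hτ
    have hchar : ∀ i, projThread i τ = [a] ∨ projThread i τ = [c] ∨
        projThread i τ = [b₁, b₂] ∨ projThread i τ = [] := by
      intro i
      rcases hτ i with h | h
      · rcases exG_path h with ⟨hbad, -⟩ | ⟨-, -, hcase⟩ | ⟨-, hbad, -⟩ | ⟨hbad, -, -⟩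
        · exact absurd hbad (by simp only [exG]; decide)
        · tauto
        · exact absurd hbad (by simp only [exG]; decide)
        · exact absurd hbad (by simp only [exG]; decide)
      · tauto
    have hlet : ∀ x ∈ τ, x.1 = a ∨ x.1 = b₁ ∨ x.1 = b₂ ∨ x.1 = c := by
      intro x hx
      have hm := mem_projThread hx
      rcases hchar x.2 with h | h | h | h <;> rw [h] at hm <;> simp at hm <;> tauto
    have hathread : ∀ x ∈ τ, ∀ y ∈ τ, y.1 = a → x.1 ≠ a → x.2 ≠ y.2 := by
      intro x hx y hy hya hxa heq
      have hmx := mem_projThread hx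
      have hmy := mem_projThread hy
      rw [heq] at hmx
      rcases hchar y.2 with h | h | h | h <;> rw [h] at hmx hmy <;> simp at hmx hmy
      · exact hxa hmx
      · exact absurd (hya.symm.trans hmy) h3
      · rcases hmy with hmy | hmy
        · exact absurd (hmy.symm.trans hya) (Ne.symm h1)
        · exact absurd (hmy.symm.trans hya) (Ne.symm h2)
    have hcthread : ∀ x ∈ τ, ∀ y ∈ τ, y.1 = c → x.1 ≠ c → x.2 ≠ y.2 := by
      intro x hx y hy hyc hxc heq
      have hmx := mem_projThread hx
      have hmy := mem_projThread hy
      rw [heq] at hmx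
      rcases hchar y.2 with h | h | h | h <;> rw [h] at hmx hmy <;> simp at hmx hmy
      · exact absurd (hyc.symm.trans hmy) (Ne.symm h3)
      · exact hxc hmx
      · rcases hmy with hmy | hmy
        · exact absurd (hmy.symm.trans hyc) h6
        · exact absurd (hmy.symm.trans hyc) h8
    have hcomm1 : ∀ x ∈ τ, ∀ y ∈ τ, (fun x : α × ℕ => decide (x.1 = a)) x = false →
        (fun x : α × ℕ => decide (x.1 = a)) y = true → (x.1, y.1) ∈ I ∧ x.2 ≠ y.2 := by
      intro x hx y hy hpx hpy
      have hpx' : x.1 ≠ a := by simpa using hpx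
      have hpy' : y.1 = a := by simpa using hpy
      refine ⟨?_, hathread x hx y hy hpy' hpx'⟩
      rw [hpy']
      rcases hlet x hx with h | h | h | h
      · exact absurd h hpx'
      · rw [h]; exact Ib1a
      · rw [h]; exact Ib2a
      · rw [h]; exact Ica
    have step1 := coveredBy_pullFront (fun x : α × ℕ => decide (x.1 = a)) τ hcomm1
    have hcomm2 : ∀ x ∈ τ.filter (fun x : α × ℕ => !decide (x.1 = a)),
        ∀ y ∈ τ.filter (fun x : α × ℕ => !decide (x.1 = a)),
        (fun x : α × ℕ => !decide (x.1 = c)) x = false →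
        (fun x : α × ℕ => !decide (x.1 = c)) y = true → (x.1, y.1) ∈ I ∧ x.2 ≠ y.2 := by
      intro x hx y hy hpx hpy
      have hpx' : x.1 = c := by simpa using hpx
      have hpy' : y.1 ≠ c := by simpa using hpy
      have hxτ := List.mem_of_mem_filter hx
      have hyτ := List.mem_of_mem_filter hy
      have hyna : y.1 ≠ a := by simpa using (List.mem_filter.mp hy).2
      refine ⟨?_, (hcthread y hyτ x hxτ hpx' hpy').symm⟩
      rw [hpx']
      rcases hlet y hyτ with h | h | h | h
      · exact absurd h hyna
      · rw [h]; exact Icb1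
      · rw [h]; exact Icb2
      · exact absurd h hpy'
    have step2 := coveredBy_pullFront (fun x : α × ℕ => !decide (x.1 = c)) _ hcomm2
    have hfix : (τ.filter (fun x : α × ℕ => !decide (x.1 = a))).filter
        (fun x : α × ℕ => !(!decide (x.1 = c))) =
        (τ.filter (fun x : α × ℕ => !decide (x.1 = a))).filter
        (fun x : α × ℕ => decide (x.1 = c)) := by
      simp only [Bool.not_not]
    rw [hfix] at step2
    have hMeq : ∀ i, projThread i ((τ.filter (fun x : α × ℕ => !decide (x.1 = a))).filter
        (fun x : α × ℕ => !decide (x.1 = c))) =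
        ((projThread i τ).filter (fun u : α => !decide (u = a))).filter
          (fun u : α => !decide (u = c)) := by
      intro i
      exact (projThread_filter_fst (fun u : α => !decide (u = c)) i
          (τ.filter (fun x : α × ℕ => !decide (x.1 = a)))).trans
        (congrArg (List.filter (fun u : α => !decide (u = c)))
          (projThread_filter_fst (fun u : α => !decide (u = a)) i τ))
    have hMchar : ∀ i, projThread i ((τ.filter (fun x : α × ℕ => !decide (x.1 = a))).filter
        (fun x : α × ℕ => !decide (x.1 = c))) = [b₁, b₂] ∨
        projThread i ((τ.filter (fun x : α × ℕ => !decide (x.1 = a))).filter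
        (fun x : α × ℕ => !decide (x.1 = c))) = [] := by
      intro i
      rw [hMeq i]
      rcases hchar i with h | h | h | h <;> rw [h]
      · right; simp
      · right; simp [Ne.symm h3]
      · left; simp [Ne.symm h1, Ne.symm h2, h6, h8]
      · right; rfl
    obtain ⟨l, hcov3, hnd, hmeml⟩ :=
      blockify Ib1b2 Ib2b2
        ((τ.filter (fun x : α × ℕ => !decide (x.1 = a))).filter
          (fun x : α × ℕ => !decide (x.1 = c))).length
        _ le_rfl hMchar
    refine ⟨τ.filter (fun x : α × ℕ => decide (x.1 = a)) ++
      (blocksOf b₁ b₂ l ++ (τ.filter (fun x : α × ℕ => !decide (x.1 = a))).filter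
        (fun x : α × ℕ => decide (x.1 = c))), ?_, ?_⟩
    · -- membership in μ̂_F(L(G'))
      simp only [morphLang, Set.mem_iUnion, exists_prop]
      refine ⟨τ.filter (fun x : α × ℕ => decide (x.1 = a)) ++
        (l.map (fun i => (β, i)) ++ (τ.filter (fun x : α × ℕ => !decide (x.1 = a))).filter
          (fun x : α × ℕ => decide (x.1 = c))), ?_, ?_⟩
      · simp only [progLang, Set.mem_setOf_eq]
        intro i
        have hA : projThread i (τ.filter (fun x : α × ℕ => decide (x.1 = a)))
            = (projThread i τ).filter (fun u : α => decide (u = a)) :=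
          projThread_filter_fst (fun u : α => decide (u = a)) i τ
        have hC : projThread i ((τ.filter (fun x : α × ℕ => !decide (x.1 = a))).filter
              (fun x : α × ℕ => decide (x.1 = c)))
            = ((projThread i τ).filter (fun u : α => !decide (u = a))).filter
              (fun u : α => decide (u = c)) :=
          (projThread_filter_fst (fun u : α => decide (u = c)) i
              (τ.filter (fun x : α × ℕ => !decide (x.1 = a)))).trans
            (congrArg (List.filter (fun u : α => decide (u = c)))
              (projThread_filter_fst (fun u : α => !decide (u = a)) i τ))
        have hB := projThread_map_idx β l hnd i
        have hMi := hmeml i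
        rw [hMeq i] at hMi
        rw [projThread_append, projThread_append, hA, hB, hC]
        rcases hchar i with h | h | h | h <;> rw [h] <;> rw [h] at hMi
        · have hnl : i ∉ l := by rw [hMi]; simp
          rw [if_neg hnl]
          left
          have heval : ([a].filter (fun u : α => decide (u = a)) ++ ([] ++
              (([a].filter (fun u : α => !decide (u = a))).filter
                (fun u : α => decide (u = c))))) = [a] := by simp
          rw [heval]
          exact mem_traces_exG'_a a c β
        · have hnl : i ∉ l := by rw [hMi]; simp [Ne.symm h3]
          rw [if_neg hnl]
          left
          have heval : ([c].filter (fun u : α => decide (u = a)) ++ ([] ++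
              (([c].filter (fun u : α => !decide (u = a))).filter
                (fun u : α => decide (u = c))))) = [c] := by
            simp [Ne.symm h3]
          rw [heval]
          exact mem_traces_exG'_c a c β
        · have hil : i ∈ l := by
            rw [hMi]
            simp [Ne.symm h1, Ne.symm h2, h6, h8]
          rw [if_pos hil]
          left
          have heval : ([b₁, b₂].filter (fun u : α => decide (u = a)) ++ ([β] ++
              (([b₁, b₂].filter (fun u : α => !decide (u = a))).filter
                (fun u : α => decide (u = c))))) = [β] := by
            simp [Ne.symm h1, Ne.symm h2, h6, h8]
          rw [heval]
          exact mem_traces_exG'_β a c β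
        · have hnl : i ∉ l := by rw [hMi]; simp
          rw [if_neg hnl]
          right
          simp
      · refine morphWord_append ?_ (morphWord_append ?_ ?_)
        · refine morphWord_id β b₁ b₂ _ ?_
          intro x hx
          have hxa : x.1 = a := by simpa using (List.mem_filter.mp hx).2
          rw [hxa]; exact h4
        · exact blocksOf_mem_morphWord β b₁ b₂ l
        · refine morphWord_id β b₁ b₂ _ ?_
          intro x hx
          have hxc : x.1 = c := by simpa using (List.mem_filter.mp hx).2
          rw [hxc]; exact h10
    · -- the covering chain
      have c2 : CoveredBy I
          (τ.filter (fun x : α × ℕ => decide (x.1 = a)) ++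
            τ.filter (fun x : α × ℕ => !decide (x.1 = a)))
          (τ.filter (fun x : α × ℕ => decide (x.1 = a)) ++
            ((τ.filter (fun x : α × ℕ => !decide (x.1 = a))).filter
                (fun x : α × ℕ => !decide (x.1 = c)) ++
              (τ.filter (fun x : α × ℕ => !decide (x.1 = a))).filter
                (fun x : α × ℕ => decide (x.1 = c)))) := by
        simpa using coveredBy_context (τ.filter (fun x : α × ℕ => decide (x.1 = a))) [] step2
      have c3 : CoveredBy I
          (τ.filter (fun x : α × ℕ => decide (x.1 = a)) ++
            ((τ.filter (fun x : α × ℕ => !decide (x.1 = a))).filter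
                (fun x : α × ℕ => !decide (x.1 = c)) ++
              (τ.filter (fun x : α × ℕ => !decide (x.1 = a))).filter
                (fun x : α × ℕ => decide (x.1 = c))))
          (τ.filter (fun x : α × ℕ => decide (x.1 = a)) ++
            (blocksOf b₁ b₂ l ++
              (τ.filter (fun x : α × ℕ => !decide (x.1 = a))).filter
                (fun x : α × ℕ => decide (x.1 = c)))) := by
        simpa [List.append_assoc] using coveredBy_context
          (τ.filter (fun x : α × ℕ => decide (x.1 = a)))
          ((τ.filter (fun x : α × ℕ => !decide (x.1 = a))).filter
            (fun x : α × ℕ => decide (x.1 = c)))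
          hcov3
      exact step1.trans (c2.trans c3)
  · -- b₁ is not a right-mover
    intro h
    have hc : c ∈ (exG a b₁ b₂ c).alphabet :=
      ⟨(0 : Fin 3), (2 : Fin 3), Or.inr (Or.inr (Or.inr ⟨rfl, rfl, rfl⟩))⟩
    have hbc := h c hc
    rw [hI] at hbc
    exact hbc.2 (by simp)
  · -- b₂ is not a left-mover
    intro h
    have ha : a ∈ (exG a b₁ b₂ c).alphabet :=
      ⟨(0 : Fin 3), (2 : Fin 3), Or.inl ⟨rfl, rfl, rfl⟩⟩
    have hab := h a ha
    rw [hI] at hab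
    exact hab.2 (by simp)
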